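/- arXiv:1412.2464 — 2 statements merged into one kernel-verified Lean document; each statement's English description precedes it below -/
import Mathlib

section
/- The points p₁ = (0,0,−a_ε) and p₂ = (0,0,a_ε) satisfy p₁ ∈ B₁, p₂ ∈ B₂, and they are fixed points of the combined reflections: R₁(R₂(p₁)) = p₁ and R₂(R₁(p₂)) = p₂. -/
open Real

noncomputable section

abbrev E3 := EuclideanSpace ℝ (Fin 3)

def pt (a b c : ℝ) : E3 := WithLp.toLp 2 ![a, b, c]

/-- Inversion (reflection) across the sphere of center `c` and radius `r`. -/
def sphRefl (c : E3) (r : ℝ) (x : E3) : E3 :=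
  (r ^ 2 / ‖x - c‖ ^ 2) • (x - c) + c


lemma pt_sub (z c : ℝ) : pt 0 0 z - pt 0 0 c = pt 0 0 (z - c) := by
  ext i; fin_cases i <;> simp [pt]

lemma pt_norm_sq (z : ℝ) : ‖pt 0 0 z‖ ^ 2 = z ^ 2 := by
  rw [EuclideanSpace.norm_eq, Real.sq_sqrt (by positivity)]
  simp [pt, Fin.sum_univ_three]

lemma sphRefl_axis (c r z : ℝ) (h : z ≠ c) :
    sphRefl (pt 0 0 c) r (pt 0 0 z) = pt 0 0 (c + r^2/(z-c)) := by
  unfold sphRefl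
  rw [pt_sub, pt_norm_sq]
  ext i; fin_cases i <;> simp [pt]
  have : z - c ≠ 0 := sub_ne_zero.mpr h
  field_simp
  ring

lemma pt_dist (z c : ℝ) : dist (pt 0 0 z) (pt 0 0 c) = |z - c| := by
  rw [dist_eq_norm, pt_sub]
  have h := pt_norm_sq (z - c)
  have hn : 0 ≤ ‖pt 0 0 (z - c)‖ := norm_nonneg _
  nlinarith [abs_nonneg (z - c), sq_abs (z - c)]

set_option maxHeartbeats 1600000 in
theorem stmt0 (r₁ r₂ ε : ℝ) (hr₁ : 0 < r₁) (hr₂ : 0 < r₂) (hε : 0 < ε)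
    (aε c₁ c₂ : ℝ)
    (haε : aε = Real.sqrt ε * Real.sqrt ((2*r₁+ε)*(2*r₂+ε)*(2*r₁+2*r₂+ε)) / (2*(r₁+r₂+ε)))
    (hc₁ : c₁ = (r₂^2 - r₁^2 - (r₁+r₂+ε)^2) / (2*(r₁+r₂+ε)))
    (hc₂ : c₂ = c₁ + r₁ + r₂ + ε)
    (p₁ p₂ : E3) (hp₁ : p₁ = pt 0 0 (-aε)) (hp₂ : p₂ = pt 0 0 aε) :
    p₁ ∈ Metric.ball (pt 0 0 c₁) r₁ ∧ p₂ ∈ Metric.ball (pt 0 0 c₂) r₂ ∧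
    sphRefl (pt 0 0 c₁) r₁ (sphRefl (pt 0 0 c₂) r₂ p₁) = p₁ ∧
    sphRefl (pt 0 0 c₂) r₂ (sphRefl (pt 0 0 c₁) r₁ p₂) = p₂ := by
  have hs : (0:ℝ) < r₁ + r₂ + ε := by linarith
  have hP : (0:ℝ) < (2*r₁+ε)*(2*r₂+ε)*(2*r₁+2*r₂+ε) := by positivity
  have haε_pos : 0 < aε := by rw [haε]; positivity
  have haε_sq : aε ^ 2 = ε * ((2*r₁+ε)*(2*r₂+ε)*(2*r₁+2*r₂+ε)) / (4*(r₁+r₂+ε)^2) := by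
    rw [haε, div_pow, mul_pow, Real.sq_sqrt hε.le, Real.sq_sqrt hP.le]
    ring
  have hkey₁ : c₁ ^ 2 - aε ^ 2 = r₁ ^ 2 := by
    rw [haε_sq, hc₁]; field_simp; ring
  have hkey₂ : c₂ ^ 2 - aε ^ 2 = r₂ ^ 2 := by
    rw [haε_sq, hc₂, hc₁]; field_simp; ring
  have hc₁neg : c₁ < 0 := by
    rw [hc₁]
    apply div_neg_of_neg_of_pos _ (by linarith)
    nlinarith
  have hc₂pos : 0 < c₂ := by
    have h : c₂ = (r₂^2 - r₁^2 + (r₁+r₂+ε)^2) / (2*(r₁+r₂+ε)) := by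
      rw [hc₂, hc₁]; field_simp; ring
    rw [h]
    apply div_pos _ (by linarith)
    nlinarith
  have haε_lt₁ : aε < -c₁ :=
    lt_of_pow_lt_pow_left₀ 2 (by linarith) (by nlinarith)
  have haε_lt₂ : aε < c₂ :=
    lt_of_pow_lt_pow_left₀ 2 (by linarith) (by nlinarith)
  have hx₁ : aε < -c₁ + r₁ := by linarith
  have hx₂ : aε < c₂ + r₂ := by linarith
  have h₁' : -c₁ - r₁ < aε := by
    by_contra h
    push_neg at h
    have h1 : aε ^ 2 ≤ (-c₁ - r₁) ^ 2 := pow_le_pow_left₀ haε_pos.le h 2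
    have h2 : -c₁ ≤ r₁ := by nlinarith [hkey₁, hr₁]
    linarith
  have h₂' : c₂ - r₂ < aε := by
    by_contra h
    push_neg at h
    have h1 : aε ^ 2 ≤ (c₂ - r₂) ^ 2 := pow_le_pow_left₀ haε_pos.le h 2
    have h2 : c₂ ≤ r₂ := by nlinarith [hkey₂, hr₂]
    linarith
  refine ⟨?_, ?_, ?_, ?_⟩
  · rw [hp₁, Metric.mem_ball, pt_dist, abs_lt]
    constructor <;> linarith
  · rw [hp₂, Metric.mem_ball, pt_dist, abs_lt]
    constructor <;> linarith
  · rw [hp₁, sphRefl_axis _ _ _ (ne_of_lt (by linarith))]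
    have h1 : c₂ + r₂^2/(-aε - c₂) = aε := by
      rw [← hkey₂]
      have hne : -aε - c₂ ≠ 0 := ne_of_lt (by linarith)
      field_simp
      ring
    rw [h1, sphRefl_axis _ _ _ (ne_of_gt (by linarith))]
    have h2 : c₁ + r₁^2/(aε - c₁) = -aε := by
      rw [← hkey₁]
      have hne : aε - c₁ ≠ 0 := ne_of_gt (by linarith)
      field_simp
      ring
    rw [h2]
  · rw [hp₂, sphRefl_axis _ _ _ (ne_of_gt (by linarith))]
    have h1 : c₁ + r₁^2/(aε - c₁) = -aε := by
      rw [← hkey₁]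
      have hne : aε - c₁ ≠ 0 := ne_of_gt (by linarith)
      field_simp
      ring
    rw [h1, sphRefl_axis _ _ _ (ne_of_lt (by linarith))]
    have h2 : c₂ + r₂^2/(-aε - c₂) = aε := by
      rw [← hkey₂]
      have hne : -aε - c₂ ≠ 0 := ne_of_lt (by linarith)
      field_simp
      ring
    rw [h2]

end
end

section
/- Let a > 0 and ξ₀ ∈ ℝ, ξ₀ ≠ 0. For every x = (x₁,x₂,x₃) ∈ ℝ³ with z := x₃ + i·|(x₁,x₂)| ∉ {a, −a}, letting (ξ,θ) be the bispherical coordinates of x, one has |x − (0,0,a·coth ξ₀)| = (a/sinh|ξ₀|)·w_θ(ξ − 2ξ₀)/w_θ(ξ). -/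
open Real

noncomputable section

/-- `w θ ξ = √(cosh ξ − cos θ)`. -/
def w (θ ξ : ℝ) : ℝ := Real.sqrt (Real.cosh ξ - Real.cos θ)

lemma sinh_abs' (t : ℝ) : Real.sinh |t| = |Real.sinh t| := by
  rcases le_or_gt 0 t with h | h
  · rw [abs_of_nonneg h, abs_of_nonneg (by simpa using Real.sinh_le_sinh.2 h)]
  · rw [abs_of_neg h, abs_of_neg (by simpa using Real.sinh_lt_sinh.2 h : Real.sinh t < 0),
      Real.sinh_neg]

lemma key_ident (sh ch s c sh0 ch0 : ℝ) (e1 : ch ^ 2 - sh ^ 2 = 1)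
    (e2 : ch0 ^ 2 - sh0 ^ 2 = 1) (hsc : s ^ 2 + c ^ 2 = 1) :
    sh0 ^ 2 * s ^ 2 + (sh * sh0 - ch0 * (ch - c)) ^ 2 =
      (ch - c) * (ch * (ch0 ^ 2 + sh0 ^ 2) - sh * (2 * sh0 * ch0) - c) := by
  linear_combination (-sh0 ^ 2) * e1 + (c ^ 2 - c * ch) * e2 + sh0 ^ 2 * hsc

theorem stmt2 (a ξ₀ : ℝ) (ha : 0 < a) (hξ₀ : ξ₀ ≠ 0)
    (x : E3) (ξ θ : ℝ) (hθ : θ ∈ Set.Icc 0 Real.pi)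
    (z : ℂ)
    (hz : z = (x 2 : ℂ) + (Real.sqrt ((x 0) ^ 2 + (x 1) ^ 2) : ℝ) * Complex.I)
    (hza : z ≠ (a : ℂ)) (hza' : z ≠ -(a : ℂ))
    (hbisph : Complex.exp ((ξ : ℂ) - (θ : ℂ) * Complex.I) = (z + a) / (z - a)) :
    ‖x - pt 0 0 (a * (Real.cosh ξ₀ / Real.sinh ξ₀))‖ =
      (a / Real.sinh |ξ₀|) * w θ (ξ - 2 * ξ₀) / w θ ξ := by
  set ρ := Real.sqrt (x 0 ^ 2 + x 1 ^ 2) with hρdef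
  have hρ0 : 0 ≤ ρ := Real.sqrt_nonneg _
  have hρ2 : ρ ^ 2 = x 0 ^ 2 + x 1 ^ 2 := Real.sq_sqrt (by positivity)
  set c := Real.cos θ with hc
  set s := Real.sin θ with hs
  set u := Real.exp ξ with hu
  have hupos : 0 < u := Real.exp_pos _
  have hsc : s ^ 2 + c ^ 2 = 1 := Real.sin_sq_add_cos_sq θ
  have hzsub : z - a ≠ 0 := sub_ne_zero.2 hza
  have heq : Complex.exp ((ξ : ℂ) - (θ : ℂ) * Complex.I) * (z - a) = z + a := by
    rw [hbisph, div_mul_cancel₀ _ hzsub]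
  have hre : (Complex.exp ((ξ : ℂ) - (θ : ℂ) * Complex.I)).re = u * c := by
    rw [Complex.exp_re]; simp [hu, hc, Real.cos_neg]
  have him : (Complex.exp ((ξ : ℂ) - (θ : ℂ) * Complex.I)).im = -(u * s) := by
    rw [Complex.exp_im]; simp [hu, hs, Real.sin_neg]
  have hzre : z.re = x 2 := by rw [hz]; simp
  have hzim : z.im = ρ := by rw [hz]; simp
  have h1 : u * c * (x 2 - a) + u * s * ρ = x 2 + a := by
    have := congrArg Complex.re heq
    simp only [Complex.mul_re, Complex.sub_re, Complex.add_re, Complex.sub_im,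
      Complex.add_im, Complex.ofReal_re, Complex.ofReal_im, hre, him, hzre, hzim] at this
    linarith
  have h2 : u * c * ρ - u * s * (x 2 - a) = ρ := by
    have := congrArg Complex.im heq
    simp only [Complex.mul_im, Complex.sub_re, Complex.add_re, Complex.sub_im,
      Complex.add_im, Complex.ofReal_re, Complex.ofReal_im, hre, him, hzre, hzim] at this
    linarith
  have hcosh : Real.cosh ξ = (u + u⁻¹) / 2 := by
    rw [Real.cosh_eq, hu, ← Real.exp_neg]
  have hsinh : Real.sinh ξ = (u - u⁻¹) / 2 := by
    rw [Real.sinh_eq, hu, ← Real.exp_neg]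
  have hDpos : 0 < Real.cosh ξ - c := by
    rcases lt_or_ge c (Real.cosh ξ) with h | h
    · linarith
    · exfalso
      have hc1 : c ≤ 1 := Real.cos_le_one θ
      have hch1 : 1 ≤ Real.cosh ξ := Real.one_le_cosh ξ
      have hcheq : Real.cosh ξ = 1 := le_antisymm (le_trans h hc1) hch1
      have hceq : c = 1 := le_antisymm hc1 (by linarith)
      have hξz : ξ = 0 := by
        have h5 := Real.cosh_sq_sub_sinh_sq ξ
        have h0 : Real.sinh ξ = 0 := by nlinarith
        by_contra h'
        exact (Real.sinh_ne_zero.2 h') h0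
      have hθz : θ = 0 := by
        have hpi := Real.pi_pos
        exact (Real.cos_eq_one_iff_of_lt_of_lt (by linarith [hθ.1])
          (by linarith [hθ.2, Real.pi_lt_d2])).1 hceq
      have hone : Complex.exp ((ξ : ℂ) - (θ : ℂ) * Complex.I) = 1 := by
        rw [hξz, hθz]; simp
      rw [hone, one_mul] at heq
      have ha0 : (a : ℂ) = 0 := by linear_combination (-(1:ℂ)/2) * heq
      rw [Complex.ofReal_eq_zero] at ha0
      exact ha.ne' ha0
  have hDne : Real.cosh ξ - c ≠ 0 := ne_of_gt hDpos
  -- solve for x 2 and ρ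
  have hx2 : x 2 * (Real.cosh ξ - c) = a * Real.sinh ξ := by
    have key : x 2 * (u ^ 2 - 2 * u * c + 1) = a * (u ^ 2 - 1) := by
      linear_combination (u * c - 1) * h1 - u * s * h2 - (x 2 - a) * u ^ 2 * hsc
    rw [hcosh, hsinh]
    field_simp
    linear_combination key
  have hρD : ρ * (Real.cosh ξ - c) = a * s := by
    have key : ρ * (u ^ 2 - 2 * u * c + 1) = 2 * a * u * s := by
      linear_combination u * s * h1 + (u * c - 1) * h2 - ρ * u ^ 2 * hsc
    rw [hcosh]
    field_simp
    linear_combination key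
  have hsh0 : Real.sinh ξ₀ ≠ 0 := Real.sinh_ne_zero.2 hξ₀
  have hD'nn : 0 ≤ Real.cosh (ξ - 2 * ξ₀) - c := by
    have := Real.one_le_cosh (ξ - 2 * ξ₀)
    have := Real.cos_le_one θ
    linarith
  -- key squared identity
  have hkey2 : Real.sinh ξ₀ ^ 2 * s ^ 2 +
      (Real.sinh ξ * Real.sinh ξ₀ - Real.cosh ξ₀ * (Real.cosh ξ - c)) ^ 2 =
      (Real.cosh ξ - c) * (Real.cosh (ξ - 2 * ξ₀) - c) := by
    rw [Real.cosh_sub, Real.cosh_two_mul, Real.sinh_two_mul]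
    have := key_ident (Real.sinh ξ) (Real.cosh ξ) s c (Real.sinh ξ₀) (Real.cosh ξ₀)
      (Real.cosh_sq_sub_sinh_sq ξ) (Real.cosh_sq_sub_sinh_sq ξ₀) hsc
    linear_combination this
  have hρsq : ρ ^ 2 * (Real.cosh ξ - c) ^ 2 = a ^ 2 * s ^ 2 := by
    linear_combination (ρ * (Real.cosh ξ - c) + a * s) * hρD
  have hb2 : (x 2 - a * (Real.cosh ξ₀ / Real.sinh ξ₀)) ^ 2 * Real.sinh ξ₀ ^ 2 =
      (x 2 * Real.sinh ξ₀ - a * Real.cosh ξ₀) ^ 2 := by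
    field_simp
  have hx2D : (x 2 * Real.sinh ξ₀ - a * Real.cosh ξ₀) * (Real.cosh ξ - c) =
      a * (Real.sinh ξ * Real.sinh ξ₀ - Real.cosh ξ₀ * (Real.cosh ξ - c)) := by
    linear_combination Real.sinh ξ₀ * hx2
  have hx2Dsq : (x 2 * Real.sinh ξ₀ - a * Real.cosh ξ₀) ^ 2 * (Real.cosh ξ - c) ^ 2 =
      a ^ 2 * (Real.sinh ξ * Real.sinh ξ₀ - Real.cosh ξ₀ * (Real.cosh ξ - c)) ^ 2 := by
    linear_combination ((x 2 * Real.sinh ξ₀ - a * Real.cosh ξ₀) * (Real.cosh ξ - c) +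
      a * (Real.sinh ξ * Real.sinh ξ₀ - Real.cosh ξ₀ * (Real.cosh ξ - c))) * hx2D
  have hmain : (ρ ^ 2 + (x 2 - a * (Real.cosh ξ₀ / Real.sinh ξ₀)) ^ 2) *
      (Real.sinh ξ₀ ^ 2 * (Real.cosh ξ - c) ^ 2) =
      a ^ 2 * ((Real.cosh ξ - c) * (Real.cosh (ξ - 2 * ξ₀) - c)) := by
    linear_combination Real.sinh ξ₀ ^ 2 * hρsq + hx2Dsq + a ^ 2 * hkey2 +
      (Real.cosh ξ - c) ^ 2 * hb2
  have hgoal : ρ ^ 2 + (x 2 - a * (Real.cosh ξ₀ / Real.sinh ξ₀)) ^ 2 =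
      a ^ 2 / Real.sinh ξ₀ ^ 2 * (Real.cosh (ξ - 2 * ξ₀) - c) / (Real.cosh ξ - c) := by
    rw [show a ^ 2 / Real.sinh ξ₀ ^ 2 * (Real.cosh (ξ - 2 * ξ₀) - c) / (Real.cosh ξ - c) =
        (a ^ 2 * ((Real.cosh ξ - c) * (Real.cosh (ξ - 2 * ξ₀) - c))) /
        (Real.sinh ξ₀ ^ 2 * (Real.cosh ξ - c) ^ 2) from by field_simp,
      eq_div_iff (mul_ne_zero (pow_ne_zero 2 hsh0) (pow_ne_zero 2 hDne))]
    exact hmain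
  -- norm computation
  have hnorm : ‖x - pt 0 0 (a * (Real.cosh ξ₀ / Real.sinh ξ₀))‖ =
      Real.sqrt (ρ ^ 2 + (x 2 - a * (Real.cosh ξ₀ / Real.sinh ξ₀)) ^ 2) := by
    rw [EuclideanSpace.norm_eq, Fin.sum_univ_three]
    congr 1
    simp [pt, Real.norm_eq_abs, sq_abs, hρ2]
  rw [hnorm, hgoal, w, w]
  have habs : Real.sinh |ξ₀| = |Real.sinh ξ₀| := sinh_abs' ξ₀
  have hans : a ^ 2 / Real.sinh ξ₀ ^ 2 * (Real.cosh (ξ - 2 * ξ₀) - c) / (Real.cosh ξ - c)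
      = ((a / Real.sinh |ξ₀|) ^ 2 * (Real.cosh (ξ - 2 * ξ₀) - c)) / (Real.cosh ξ - c) := by
    rw [habs, div_pow, sq_abs]
  rw [hans, Real.sqrt_div (by positivity), Real.sqrt_mul (by positivity),
    Real.sqrt_sq (by positivity)]

end
end
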